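/- arXiv:1402.7197 — 2 statements merged into one kernel-verified Lean document; each statement's English description precedes it below -/
import Mathlib

section
/- Let R be a discrete valuation ring with fraction field K, let n be a positive integer, and let G be a subgroup of GL_n(K). Suppose H is a subgroup of G of finite index such that for every h ∈ H, all matrix entries of h and of h⁻¹ lie in (the image of) R. Then there exists T ∈ GL_n(K) such that for every g ∈ G, all matrix entries of T⁻¹·g·T and of its inverse lie in (the image of) R. -/
open Matrix Submodule

section quotaux
variable {Γ : Type*} [Group Γ] {s : Subgroup Γ}

lemma mk_mul_out (x a : Γ) :
    (QuotientGroup.mk (x * (QuotientGroup.mk a : Γ ⧸ s).out) : Γ ⧸ s) = QuotientGroup.mk (x * a) := by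
  rw [QuotientGroup.eq]
  have h : ((QuotientGroup.mk a : Γ ⧸ s).out)⁻¹ * a ∈ s :=
    QuotientGroup.eq.mp (QuotientGroup.out_eq' (QuotientGroup.mk a : Γ ⧸ s))
  simpa [mul_assoc] using h

lemma surj_mul_out (x : Γ) :
    Function.Surjective (fun q : Γ ⧸ s => (QuotientGroup.mk (x * Quotient.out q) : Γ ⧸ s)) := by
  intro q
  refine ⟨QuotientGroup.mk (x⁻¹ * Quotient.out q), ?_⟩
  simp only [mk_mul_out x (x⁻¹ * Quotient.out q)]
  rw [← mul_assoc, mul_inv_cancel, one_mul, QuotientGroup.out_eq']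

lemma out_shift_mem (x : Γ) (q : Γ ⧸ s) :
    (Quotient.out (QuotientGroup.mk (x * Quotient.out q) : Γ ⧸ s))⁻¹ * (x * Quotient.out q) ∈ s :=
  QuotientGroup.eq.mp (QuotientGroup.out_eq' _)

end quotaux

section aux

variable {R : Type*} [CommRing R] {K : Type*} [Field K] [Algebra R K] {n : ℕ}

/-- The standard lattice `R^n` inside `K^n`. -/
def intLattice (R : Type*) [CommRing R] (K : Type*) [Field K] [Algebra R K] (n : ℕ) :
    Submodule R (Fin n → K) :=
  Submodule.span R (Set.range fun i : Fin n => (Pi.single i 1 : Fin n → K))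

/-- Matrix action as `R`-linear map on `K^n`. -/
def mulVecR (R : Type*) [CommRing R] {K : Type*} [Field K] [Algebra R K] {n : ℕ}
    (M : Matrix (Fin n) (Fin n) K) : (Fin n → K) →ₗ[R] (Fin n → K) :=
  LinearMap.restrictScalars R M.mulVecLin

@[simp] lemma mulVecR_apply (M : Matrix (Fin n) (Fin n) K) (v : Fin n → K) :
    mulVecR R M v = M *ᵥ v := rfl

lemma mulVecR_mul (M N : Matrix (Fin n) (Fin n) K) :
    mulVecR R (M * N) = (mulVecR R M) ∘ₗ (mulVecR R N) := by
  ext v i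
  simp [mulVecR, Matrix.mulVecLin_mul]

lemma mem_intLattice_iff {v : Fin n → K} :
    v ∈ intLattice R K n ↔ ∀ i, v i ∈ (algebraMap R K).range := by
  rw [intLattice, mem_span_range_iff_exists_fun]
  constructor
  · rintro ⟨c, rfl⟩ i
    refine ⟨c i, ?_⟩
    simp [Finset.sum_apply, Pi.single_apply, Algebra.smul_def]
  · intro h
    choose c hc using h
    refine ⟨c, funext fun i => ?_⟩
    simp [Finset.sum_apply, Pi.single_apply, Algebra.smul_def, hc]

lemma map_intLattice_le (M : Matrix (Fin n) (Fin n) K)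
    (hM : ∀ i j, M i j ∈ (algebraMap R K).range) :
    (intLattice R K n).map (mulVecR R M) ≤ intLattice R K n := by
  conv_lhs => rw [intLattice]
  rw [Submodule.map_span, Submodule.span_le]
  rintro x ⟨y, ⟨i, rfl⟩, rfl⟩
  rw [SetLike.mem_coe]
  apply mem_intLattice_iff.mpr
  intro j
  simpa [Matrix.mulVec_single_one] using hM j i

lemma map_intLattice_eq (h : GL (Fin n) K)
    (hh : ∀ i j, ((h : Matrix (Fin n) (Fin n) K) i j ∈ (algebraMap R K).range ∧
      ((h⁻¹ : GL (Fin n) K) : Matrix (Fin n) (Fin n) K) i j ∈ (algebraMap R K).range)) :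
    (intLattice R K n).map (mulVecR R (h : Matrix (Fin n) (Fin n) K)) = intLattice R K n := by
  refine le_antisymm (map_intLattice_le _ fun i j => (hh i j).1) ?_
  have h2 := map_intLattice_le ((h⁻¹ : GL (Fin n) K) : Matrix (Fin n) (Fin n) K)
    (fun i j => (hh i j).2)
  have h3 := Submodule.map_mono (f := mulVecR R (h : Matrix (Fin n) (Fin n) K)) h2
  rw [← Submodule.map_comp, ← mulVecR_mul, ← Units.val_mul, mul_inv_cancel, Units.val_one] at h3
  have hone : mulVecR R (1 : Matrix (Fin n) (Fin n) K) = LinearMap.id :=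
    LinearMap.ext fun v => by simp
  rwa [hone, Submodule.map_id] at h3

end aux

lemma conj_entry_eq_repr {K : Type*} [Field K] {n : ℕ} (Bas : Module.Basis (Fin n) K (Fin n → K))
    (g : Matrix (Fin n) (Fin n) K) (i j : Fin n) :
    (Bas.toMatrix (Pi.basisFun K (Fin n)) * g * (Pi.basisFun K (Fin n)).toMatrix Bas) i j =
    Bas.repr (g *ᵥ Bas j) i := by
  have hg0 : LinearMap.toMatrix (Pi.basisFun K (Fin n)) (Pi.basisFun K (Fin n))
      (Matrix.toLin' g) = g := by
    rw [LinearMap.toMatrix_eq_toMatrix', LinearMap.toMatrix'_toLin']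
  conv_lhs => rw [← hg0]
  rw [basis_toMatrix_mul_linearMap_toMatrix_mul_basis_toMatrix, LinearMap.toMatrix_apply,
    Matrix.toLin'_apply]

set_option maxHeartbeats 1000000 in
/-- Let `R` be a DVR with fraction field `K` and let `G ≤ GL_n(K)`.  If `H ≤ G` has finite
index in `G` and every element of `H` has all entries (of itself and of its inverse) in `R`,
then some `T ∈ GL_n(K)` conjugates all of `G` into matrices with entries in `R`. -/
theorem conjugate_into_integral_matrices (R : Type*) [CommRing R] [IsDomain R]
    [IsDiscreteValuationRing R] (K : Type*) [Field K] [Algebra R K] [IsFractionRing R K]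
    (n : ℕ) (hn : 0 < n) (G H : Subgroup (GL (Fin n) K)) (hHG : H ≤ G)
    (hindex : H.relIndex G ≠ 0)
    (hH : ∀ h ∈ H, ∀ i j,
      ((h : Matrix (Fin n) (Fin n) K) i j ∈ (algebraMap R K).range ∧
       ((h⁻¹ : GL (Fin n) K) : Matrix (Fin n) (Fin n) K) i j ∈ (algebraMap R K).range)) :
    ∃ T : GL (Fin n) K, ∀ g ∈ G, ∀ i j,
      (((T⁻¹ * g * T : GL (Fin n) K) : Matrix (Fin n) (Fin n) K) i j ∈ (algebraMap R K).range ∧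
       (((T⁻¹ * g * T)⁻¹ : GL (Fin n) K) : Matrix (Fin n) (Fin n) K) i j ∈
         (algebraMap R K).range) := by
  classical
  set H' := H.subgroupOf G with hH'
  have hfin : Finite (G ⧸ H') := by
    rw [Subgroup.relIndex] at hindex
    exact (Nat.card_ne_zero.mp hindex).2
  set Λ₀ := intLattice R K n with hΛ₀
  have hmemH : ∀ x : GL (Fin n) K, x ∈ H →
      Λ₀.map (mulVecR R (x : Matrix (Fin n) (Fin n) K)) = Λ₀ := fun x hx =>
    map_intLattice_eq _ (hH _ hx)
  set rep : (G ⧸ H') → GL (Fin n) K := fun q => ((Quotient.out q : G) : GL (Fin n) K) with hrep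
  set L : Submodule R (Fin n → K) :=
    ⨆ q : G ⧸ H', Λ₀.map (mulVecR R (rep q : Matrix (Fin n) (Fin n) K)) with hL
  -- G maps L to L
  have hGL : ∀ g ∈ G, L.map (mulVecR R (g : Matrix (Fin n) (Fin n) K)) = L := by
    intro g hg
    rw [hL, Submodule.map_iSup]
    set x : G := ⟨g, hg⟩ with hx
    set σ : (G ⧸ H') → (G ⧸ H') := fun q => QuotientGroup.mk (x * Quotient.out q) with hσ
    have key : ∀ q : G ⧸ H',
        (Λ₀.map (mulVecR R (rep q : Matrix (Fin n) (Fin n) K))).map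
          (mulVecR R (g : Matrix (Fin n) (Fin n) K)) =
        Λ₀.map (mulVecR R (rep (σ q) : Matrix (Fin n) (Fin n) K)) := by
      intro q
      have hcos : (Quotient.out (σ q) : G)⁻¹ * (x * Quotient.out q) ∈ H' :=
        out_shift_mem x q
      set y : G := (Quotient.out (σ q) : G)⁻¹ * (x * Quotient.out q) with hy
      have hyH : ((y : G) : GL (Fin n) K) ∈ H := (Subgroup.mem_subgroupOf).mp hcos
      have heq : g * rep q = rep (σ q) * ((y : G) : GL (Fin n) K) := by
        rw [hrep, hy]
        push_cast
        group
        rfl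
      have step : (Λ₀.map (mulVecR R (rep q : Matrix (Fin n) (Fin n) K))).map
          (mulVecR R (g : Matrix (Fin n) (Fin n) K)) =
          Λ₀.map (mulVecR R ((g * rep q : GL (Fin n) K) : Matrix (Fin n) (Fin n) K)) := by
        rw [Units.val_mul, mulVecR_mul, Submodule.map_comp]
      rw [step, heq, Units.val_mul, mulVecR_mul, Submodule.map_comp, hmemH _ hyH]
    simp only [key]
    exact (surj_mul_out x).iSup_comp
      (g := fun q => Λ₀.map (mulVecR R (rep q : Matrix (Fin n) (Fin n) K)))
  -- Λ₀ is contained in L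
  have hΛ₀L : Λ₀ ≤ L := by
    set q₁ : G ⧸ H' := QuotientGroup.mk (1 : G) with hq₁
    have h1 : (Quotient.out q₁ : G) ∈ H' := by
      have h2 := QuotientGroup.eq.mp (QuotientGroup.out_eq' q₁)
      rw [mul_one] at h2
      simpa using inv_mem h2
    have h3 : Λ₀.map (mulVecR R (rep q₁ : Matrix (Fin n) (Fin n) K)) = Λ₀ :=
      hmemH _ ((Subgroup.mem_subgroupOf).mp h1)
    calc Λ₀ = Λ₀.map (mulVecR R (rep q₁ : Matrix (Fin n) (Fin n) K)) := h3.symm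
      _ ≤ L := le_iSup (fun q => Λ₀.map (mulVecR R (rep q : Matrix (Fin n) (Fin n) K))) q₁
  -- L is finitely generated, hence free over the DVR, with basis spanning K^n
  have hfg : L.FG := by
    rw [hL]
    exact Submodule.fg_iSup _ fun q =>
      (Submodule.fg_span (Set.finite_range _)).map _
  haveI : Module.Finite R L := Module.Finite.iff_fg.mpr hfg
  obtain ⟨ι, hι, b⟩ : ∃ ι : Type _, ∃ _ : Fintype ι, Nonempty (Module.Basis ι R L) :=
    ⟨Module.Free.ChooseBasisIndex R L, inferInstance, ⟨Module.Free.chooseBasis R L⟩⟩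
  obtain ⟨b⟩ := b
  set v : ι → (Fin n → K) := fun i => (b i : Fin n → K) with hv
  have hli : LinearIndependent R v := by
    have := b.linearIndependent.map' L.subtype (Submodule.ker_subtype L)
    exact this
  have hliK : LinearIndependent K v := (LinearIndependent.iff_fractionRing R K).mp hli
  have hLspan : L = Submodule.span R (Set.range v) := by
    conv_lhs => rw [← Submodule.map_subtype_top L, ← b.span_eq]
    rw [Submodule.map_span, ← Set.range_comp]
    rfl
  have hLle : L ≤ (Submodule.span K (Set.range v)).restrictScalars R := by
    rw [hLspan]
    exact Submodule.span_le.mpr Submodule.subset_span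
  have hspan : Submodule.span K (Set.range v) = ⊤ := by
    rw [eq_top_iff, ← (Pi.basisFun K (Fin n)).span_eq, Submodule.span_le]
    rintro _ ⟨i, rfl⟩
    have hsingle : (Pi.single i 1 : Fin n → K) ∈ Λ₀ :=
      Submodule.subset_span ⟨i, rfl⟩
    have : (Pi.single i 1 : Fin n → K) ∈ Submodule.span K (Set.range v) :=
      hLle (hΛ₀L hsingle)
    simpa [Pi.basisFun_apply] using this
  -- build a K-basis of K^n from the R-basis of L
  set B₀ : Module.Basis ι K (Fin n → K) := Module.Basis.mk hliK (by rw [hspan]) with hB₀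
  haveI : Fintype ι := hι
  have hcard : Fintype.card ι = n := by
    have h1 := Module.finrank_eq_card_basis B₀
    rw [Module.finrank_fin_fun] at h1
    omega
  set e : ι ≃ Fin n := Fintype.equivFinOfCardEq hcard with he
  set B : Module.Basis (Fin n) K (Fin n → K) := B₀.reindex e with hB
  have hBv : ∀ j, B j = v (e.symm j) := by
    intro j
    rw [hB, Module.Basis.reindex_apply, hB₀, Module.Basis.mk_apply]
  have hBL : ∀ j, B j ∈ L := by
    intro j
    rw [hBv, hLspan]
    exact Submodule.subset_span ⟨e.symm j, rfl⟩
  have hrangeB : Set.range (fun j => B j) = Set.range v := by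
    have : (fun j => B j) = v ∘ e.symm := funext hBv
    rw [this, Set.range_comp, Equiv.range_eq_univ, Set.image_univ]
  -- coordinates w.r.t. B of elements of L lie in R
  have hrepr : ∀ w ∈ L, ∀ i, B.repr w i ∈ (algebraMap R K).range := by
    intro w hw i
    have hw2 : w ∈ Submodule.span R (Set.range fun j => B j) := by
      rw [hrangeB, ← hLspan]; exact hw
    rw [mem_span_range_iff_exists_fun] at hw2
    obtain ⟨c, hc⟩ := hw2
    refine ⟨c i, ?_⟩
    have hc' : (∑ j, (algebraMap R K (c j)) • B j) = w := by
      rw [← hc]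
      exact Finset.sum_congr rfl fun j _ => by rw [algebraMap_smul]
    rw [← hc', B.repr_sum_self]
  -- the change of basis matrix
  haveI : Invertible ((Pi.basisFun K (Fin n)).toMatrix B) :=
    (Pi.basisFun K (Fin n)).invertibleToMatrix B
  refine ⟨unitOfInvertible ((Pi.basisFun K (Fin n)).toMatrix B), ?_⟩
  have main : ∀ g ∈ G, ∀ i j,
      (((unitOfInvertible ((Pi.basisFun K (Fin n)).toMatrix B))⁻¹ * g *
        unitOfInvertible ((Pi.basisFun K (Fin n)).toMatrix B) : GL (Fin n) K) :
        Matrix (Fin n) (Fin n) K) i j ∈ (algebraMap R K).range := by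
    intro g hg i j
    have hinvP : ((unitOfInvertible ((Pi.basisFun K (Fin n)).toMatrix B))⁻¹ :
        GL (Fin n) K) = (B.toMatrix (Pi.basisFun K (Fin n)) : Matrix (Fin n) (Fin n) K) := by
      rw [val_inv_unitOfInvertible]
      exact invOf_eq_right_inv (Module.Basis.toMatrix_mul_toMatrix_flip _ _)
    have hval : (((unitOfInvertible ((Pi.basisFun K (Fin n)).toMatrix B))⁻¹ * g *
        unitOfInvertible ((Pi.basisFun K (Fin n)).toMatrix B) : GL (Fin n) K) :
        Matrix (Fin n) (Fin n) K) =
        B.toMatrix (Pi.basisFun K (Fin n)) * (g : Matrix (Fin n) (Fin n) K) *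
          (Pi.basisFun K (Fin n)).toMatrix B := by
      rw [Units.val_mul, Units.val_mul, hinvP, val_unitOfInvertible]
    rw [hval, conj_entry_eq_repr]
    have hmem : (g : Matrix (Fin n) (Fin n) K) *ᵥ B j ∈ L := by
      have h5 : mulVecR R (g : Matrix (Fin n) (Fin n) K) (B j) ∈
          L.map (mulVecR R (g : Matrix (Fin n) (Fin n) K)) :=
        Submodule.mem_map_of_mem (hBL j)
      rw [hGL g hg] at h5
      exact h5
    exact hrepr _ hmem i
  intro g hg i j
  refine ⟨main g hg i j, ?_⟩
  have hinv : ((unitOfInvertible ((Pi.basisFun K (Fin n)).toMatrix B))⁻¹ * g *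
      unitOfInvertible ((Pi.basisFun K (Fin n)).toMatrix B))⁻¹ =
      (unitOfInvertible ((Pi.basisFun K (Fin n)).toMatrix B))⁻¹ * g⁻¹ *
      unitOfInvertible ((Pi.basisFun K (Fin n)).toMatrix B) := by
    group
  rw [hinv]
  exact main g⁻¹ (inv_mem hg) i j
end

section
/- Let p be a prime, let k be a field of characteristic p, let G be a finite group, and let P be a normal subgroup of G that is a p-group. If V is a simple module over the group algebra k[G], then every element of P acts as the identity on V; that is, the fixed subspace V^P equals V. -/
/-- A finite `p`-group acting on a nontrivial `ZMod p`-module has a nonzero fixed vector. -/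
lemma aux_pGroup_exists_nonzero_fixed (p : ℕ) [Fact p.Prime]
    (Q : Type*) [Group Q] [Finite Q] (hQ : IsPGroup p Q)
    (M : Type*) [AddCommGroup M] [Module (ZMod p) M] [Nontrivial M]
    [DistribMulAction Q M] :
    ∃ m : M, m ≠ 0 ∧ ∀ g : Q, g • m = m := by
  classical
  have hp : p.Prime := Fact.out
  obtain ⟨v, hv0⟩ := exists_ne (0 : M)
  set W : Submodule (ZMod p) M :=
    Submodule.span (ZMod p) (Set.range fun g : Q => g • v) with hWdef
  haveI : Module.Finite (ZMod p) W :=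
    Module.Finite.span_of_finite (ZMod p) (Set.finite_range _)
  haveI : Finite W := Module.finite_of_finite (ZMod p)
  have hmem : ∀ (g : Q) (x : M), x ∈ W → g • x ∈ W := by
    intro g x hx
    refine Submodule.span_induction ?_ ?_ ?_ ?_ hx
    · rintro y ⟨h, rfl⟩
      exact Submodule.subset_span ⟨g * h, mul_smul g h v⟩
    · rw [smul_zero]; exact W.zero_mem
    · intro a b _ _ ha hb
      rw [smul_add]; exact W.add_mem ha hb
    · intro c y _ hy
      have : g • (c • y) = c • (g • y) :=
        ZMod.map_smul (DistribMulAction.toAddMonoidHom M g) c y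
      rw [this]; exact W.smul_mem c hy
  letI : MulAction Q W :=
    { smul := fun g w => ⟨g • (w : M), hmem g w w.2⟩
      one_smul := fun w => Subtype.ext (one_smul Q (w : M))
      mul_smul := fun g h w => Subtype.ext (mul_smul g h (w : M)) }
  have hvW : v ∈ W := Submodule.subset_span ⟨1, one_smul Q v⟩
  haveI : Nontrivial W := ⟨⟨⟨v, hvW⟩, 0, by simp [Subtype.ext_iff, hv0]⟩⟩
  have hcard := hQ.card_modEq_card_fixedPoints W
  have hpdvd : p ∣ Nat.card W := by
    haveI := Fintype.ofFinite W
    rw [Nat.card_eq_fintype_card, Module.card_eq_pow_finrank (K := ZMod p) (V := W), ZMod.card]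
    exact dvd_pow_self p Module.finrank_pos.ne'
  have hfixdvd : p ∣ Nat.card (MulAction.fixedPoints Q W) :=
    Nat.modEq_zero_iff_dvd.mp (((Nat.modEq_zero_iff_dvd.mpr hpdvd).symm.trans hcard).symm)
  have hfix0 : (0 : W) ∈ MulAction.fixedPoints Q W := by
    intro g
    exact Subtype.ext (smul_zero g)
  haveI : Finite (MulAction.fixedPoints Q W) := Subtype.finite
  have hcard2 : 2 ≤ Nat.card (MulAction.fixedPoints Q W) := by
    have hpos : 0 < Nat.card (MulAction.fixedPoints Q W) :=
      @Nat.card_pos _ ⟨⟨0, hfix0⟩⟩ _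
    have := Nat.le_of_dvd hpos hfixdvd
    have := hp.two_le
    omega
  have hex : ∃ w ∈ MulAction.fixedPoints Q W, w ≠ 0 := by
    by_contra hcon
    push_neg at hcon
    have hsub : MulAction.fixedPoints Q W ⊆ {0} := fun x hx => hcon x hx
    have hle : Nat.card (MulAction.fixedPoints Q W) ≤ Nat.card ({0} : Set W) :=
      Nat.card_mono (Set.finite_singleton 0) hsub
    have h1 : Nat.card ({0} : Set W) = 1 := by simp
    omega
  obtain ⟨w, hwfix, hw0⟩ := hex
  refine ⟨(w : M), ?_, ?_⟩
  · intro h0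
    exact hw0 (Subtype.ext h0)
  · intro g
    exact congrArg Subtype.val (hwfix g)

/-- If `P` is a normal `p`-subgroup of a finite group `G` and `V` is a simple module over the
group algebra `k[G]`, where `char k = p`, then every element of `P` acts trivially on `V`. -/
theorem normal_pSubgroup_acts_trivially_on_simple (p : ℕ) [Fact p.Prime]
    (k : Type*) [Field k] [CharP k p]
    (G : Type*) [Group G] [Finite G] (P : Subgroup G) [P.Normal] (hP : IsPGroup p P)
    (V : Type*) [AddCommGroup V] [Module (MonoidAlgebra k G) V]
    (hV : IsSimpleModule (MonoidAlgebra k G) V) :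
    ∀ g ∈ P, ∀ v : V, (MonoidAlgebra.of k G g) • v = v := by
  classical
  have hp : p.Prime := Fact.out
  -- The submodule of `P`-fixed vectors.
  set S : Submodule (MonoidAlgebra k G) V :=
    { carrier := {v | ∀ h ∈ P, (MonoidAlgebra.of k G h) • v = v}
      add_mem' := by
        intro a b ha hb h hh
        rw [smul_add, ha h hh, hb h hh]
      zero_mem' := by intro h hh; rw [smul_zero]
      smul_mem' := by
        intro r v hv
        induction r using MonoidAlgebra.induction_on with
        | of g =>
          intro h hh
          have hconj : g⁻¹ * h * g ∈ P := by
            have := Subgroup.Normal.conj_mem ‹P.Normal› h hh g⁻¹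
            simpa [mul_assoc] using this
          have key : (MonoidAlgebra.of k G h) * (MonoidAlgebra.of k G g)
              = (MonoidAlgebra.of k G g) * (MonoidAlgebra.of k G (g⁻¹ * h * g)) := by
            rw [← map_mul, ← map_mul]
            congr 1
            group
          rw [← mul_smul, key, mul_smul, hv _ hconj]
        | add f g hf hg =>
          intro h hh
          rw [add_smul, smul_add, hf h hh, hg h hh]
        | smul c f hf =>
          intro h hh
          have hc : (c • f) = (algebraMap k (MonoidAlgebra k G) c) * f := by
            rw [Algebra.smul_def]
          have hcomm : (MonoidAlgebra.of k G h) * (algebraMap k (MonoidAlgebra k G) c)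
              = (algebraMap k (MonoidAlgebra k G) c) * (MonoidAlgebra.of k G h) :=
            (Algebra.commutes c (MonoidAlgebra.of k G h)).symm
          rw [hc, mul_smul, ← mul_smul, hcomm, mul_smul, hf h hh] } with hS
  -- `V` is a `ZMod p` module.
  have hptor : ∀ x : V, p • x = 0 := by
    intro x
    have hpz : ((p : ℕ) : MonoidAlgebra k G) = 0 := by
      rw [← map_natCast (algebraMap k (MonoidAlgebra k G)) p, CharP.cast_eq_zero k p, map_zero]
    calc p • x = ((p : ℕ) : MonoidAlgebra k G) • x := (Nat.cast_smul_eq_nsmul _ _ _).symm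
      _ = 0 := by rw [hpz, zero_smul]
  haveI : NeZero p := ⟨hp.ne_zero⟩
  letI instZMod : Module (ZMod p) V := AddCommGroup.zmodModule hptor
  haveI : Nontrivial V := IsSimpleModule.nontrivial (MonoidAlgebra k G) V
  letI instAct : DistribMulAction P V :=
    { smul := fun g x => (MonoidAlgebra.of k G (g : G)) • x
      one_smul := fun x => by
        show (MonoidAlgebra.of k G ((1 : P) : G)) • x = x
        rw [OneMemClass.coe_one, map_one, one_smul]
      mul_smul := fun g h x => by
        show (MonoidAlgebra.of k G ((g * h : P) : G)) • x = _
        rw [Subgroup.coe_mul, map_mul, mul_smul]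
        rfl
      smul_zero := fun g => smul_zero _
      smul_add := fun g a b => smul_add _ a b }
  obtain ⟨w, hw0, hwfix⟩ := aux_pGroup_exists_nonzero_fixed p P hP V
  have hwS : w ∈ S := by
    intro h hh
    exact hwfix ⟨h, hh⟩
  have hStop : S = ⊤ := by
    rcases hV.1.2 S with h | h
    · exfalso
      rw [h] at hwS
      exact hw0 hwS
    · exact h
  intro g hg x
  have hx : x ∈ S := hStop ▸ Submodule.mem_top
  exact hx g hg
end
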